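/- Let T be a rooted tree with m ≥ 1 leaves labeled by binary vectors y₁,…,y_m ∈ {0,1}ⁿ, where each internal node v is labeled z_v = ⋁_{leaves ℓ under v} y_ℓ. Define c(T) = n + Σ_{v ∈ V(T)} ‖z_v‖₁ · deg(v). If every vector yᵢ has exactly one coordinate equal to 1 (multi-class case), and pⱼ = ‖yⱼ‖₁/n, then c(T) ≥ n + (3n/log₂3)·H(p₁,…,p_m), where H(p₁,…,p_m) = Σⱼ pⱼ log₂(1/pⱼ). -/

import Mathlib

/-- A rooted tree with leaves labeled by `α`. -/
inductive RTree (α : Type) where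
  | leaf : α → RTree α
  | node : List (RTree α) → RTree α

namespace RTree

/-- The list of leaf labels of a tree. -/
def leaves {α : Type} : RTree α → List α
  | .leaf a => [a]
  | .node ts => (ts.attach.map (fun ⟨t, _⟩ => t.leaves)).flatten

end RTree

/-- Hamming weight of a binary vector. -/
def hw {n : ℕ} (z : Fin n → Bool) : ℕ := (Finset.univ.filter (fun i => z i = true)).card

/-- Coordinatewise OR of a list of binary vectors. -/
def orv {n : ℕ} (ys : List (Fin n → Bool)) : Fin n → Bool := fun i => ys.any (fun y => y i)

/-- `∑_{v ∈ V(T)} ‖z_v‖₁ · deg(v)`, where `z_v` is the OR of the leaf labels below `v`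
and `deg(v)` the number of children of `v` (0 for leaves). -/
def RTree.cost {n : ℕ} : RTree (Fin n → Bool) → ℕ
  | .leaf _ => 0
  | .node ts => hw (orv (RTree.leaves (.node ts))) * ts.length
      + (ts.attach.map (fun ⟨t, _⟩ => t.cost)).sum

/- ------------------ auxiliary lemmas ------------------ -/

theorem RTree.myrec {α} {motive : RTree α → Prop}
    (hleaf : ∀ a, motive (.leaf a))
    (hnode : ∀ ts, (∀ t ∈ ts, motive t) → motive (.node ts)) :
    ∀ t, motive t
  | .leaf a => hleaf a
  | .node ts => hnode ts (fun t ht =>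
      have : sizeOf t < sizeOf (RTree.node ts) := by
        have := List.sizeOf_lt_of_mem ht
        simp only [RTree.node.sizeOf_spec]; omega
      RTree.myrec hleaf hnode t)
termination_by t => sizeOf t

lemma hw_eq_sum {n : ℕ} (z : Fin n → Bool) :
    hw z = ∑ i : Fin n, if z i then 1 else 0 := by
  unfold hw
  rw [Finset.card_filter]

lemma sum_hw {n : ℕ} (L : List (Fin n → Bool)) :
    (L.map hw).sum = ∑ i : Fin n, L.countP (fun y => y i) := by
  induction L with
  | nil => simp
  | cons y L ih =>
    simp only [List.map_cons, List.sum_cons, ih, List.countP_cons, hw_eq_sum y]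
    rw [← Finset.sum_add_distrib]
    apply Finset.sum_congr rfl
    intro i _
    exact Nat.add_comm _ _

lemma hw_orv_eq {n : ℕ} (L : List (Fin n → Bool))
    (h : ∀ i, L.countP (fun y => y i) ≤ 1) :
    hw (orv L) = (L.map hw).sum := by
  rw [sum_hw, hw_eq_sum]
  apply Finset.sum_congr rfl
  intro i _
  by_cases ha : orv L i
  · have : 0 < L.countP (fun y => y i) := by
      rw [List.countP_pos_iff]
      simpa [orv, List.any_eq_true] using ha
    rw [if_pos ha]
    exact (Nat.le_antisymm (h i) this).symm
  · have : L.countP (fun y => y i) = 0 := by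
      rw [List.countP_eq_zero]
      intro y hy hyi
      exact ha (by simp only [orv, List.any_eq_true]; exact ⟨y, hy, hyi⟩)
    rw [if_neg ha, this]

lemma term_bound (w W : ℝ) (k : ℕ) (hw0 : 0 ≤ w) (hwW : w ≤ W) (hk : 1 ≤ k) :
    w * (Real.log W - Real.log w) ≤ w * Real.log k + (W / k - w) := by
  have hk0 : (0:ℝ) < k := by exact_mod_cast hk
  rcases eq_or_lt_of_le hw0 with h0 | h0
  · rw [← h0]
    have : 0 ≤ W / k := div_nonneg (le_trans hw0 hwW) hk0.le
    simpa using this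
  · have hW0 : 0 < W := lt_of_lt_of_le h0 hwW
    have hx : 0 < W / (k * w) := div_pos hW0 (mul_pos hk0 h0)
    have hl := Real.log_le_sub_one_of_pos hx
    rw [Real.log_div hW0.ne' (mul_pos hk0 h0).ne', Real.log_mul hk0.ne' h0.ne'] at hl
    have h2 := mul_le_mul_of_nonneg_left hl h0.le
    have h3 : w * (W / (k * w) - 1) = W / k - w := by
      field_simp
    nlinarith [h2, h3]

lemma sum_map_affine (ws : List ℝ) (c d : ℝ) :
    (ws.map (fun w => w * c + (d - w))).sum = ws.sum * c + ((ws.length : ℝ) * d - ws.sum) := by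
  induction ws with
  | nil => simp
  | cons a ws ih => simp [ih]; push_cast; ring

lemma entropy_list (ws : List ℝ) (h0 : ∀ w ∈ ws, 0 ≤ w) (hne : ws ≠ []) :
    (ws.map (fun w => w * (Real.log ws.sum - Real.log w))).sum
      ≤ ws.sum * Real.log ws.length := by
  have hk : 1 ≤ ws.length := List.length_pos_of_ne_nil hne
  have hstep : (ws.map (fun w => w * (Real.log ws.sum - Real.log w))).sum
      ≤ (ws.map (fun w => w * Real.log ws.length + (ws.sum / ws.length - w))).sum := by
    apply List.sum_le_sum
    intro w hwmem
    exact term_bound w ws.sum ws.length (h0 w hwmem) (List.single_le_sum h0 w hwmem) hk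
  refine hstep.trans ?_
  rw [sum_map_affine]
  have : (ws.length : ℝ) * (ws.sum / ws.length) = ws.sum := by
    field_simp
  rw [this]
  ring_nf
  exact le_refl _

lemma three_log (k : ℕ) (hk : 1 ≤ k) : 3 * Real.log k ≤ k * Real.log 3 := by
  have hl3 : (0:ℝ) < Real.log 3 := Real.log_pos (by norm_num)
  match k, hk with
  | 1, _ => simpa using hl3.le
  | 2, _ =>
    have h8 : (3:ℝ) * Real.log 2 = Real.log 8 := by
      rw [show (8:ℝ) = 2 ^ (3:ℕ) by norm_num, Real.log_pow]; push_cast; ring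
    have h9 : (2:ℝ) * Real.log 3 = Real.log 9 := by
      rw [show (9:ℝ) = 3 ^ (2:ℕ) by norm_num, Real.log_pow]; push_cast; ring
    push_cast
    rw [h8, h9]
    exact Real.log_le_log (by norm_num) (by norm_num)
  | (m+3), _ =>
    set k : ℕ := m + 3 with hkdef
    have hk3 : (3:ℝ) ≤ (k:ℝ) := by exact_mod_cast Nat.le_add_left 3 m
    have he3 : Real.exp 1 ≤ 3 := Real.exp_one_lt_d9.le.trans (by norm_num)
    have hanti := Real.log_div_self_antitoneOn (a := (3:ℝ)) (b := (k:ℝ))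
      (by simpa using he3) (by exact he3.trans hk3) hk3
    have hk0 : (0:ℝ) < (k:ℝ) := by linarith
    rw [div_le_div_iff₀ hk0 (by norm_num : (0:ℝ) < 3)] at hanti
    linarith

lemma shift_sum {n : ℕ} (L : List (Fin n → Bool)) (Wr Vr : ℝ) :
    (L.map (fun y => (hw y : ℝ) * Real.log Wr - (hw y : ℝ) * Real.log (hw y))).sum
    = (L.map (fun y => (hw y : ℝ) * Real.log Vr - (hw y : ℝ) * Real.log (hw y))).sum
      + ((L.map hw).sum : ℝ) * (Real.log Wr - Real.log Vr) := by
  induction L with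
  | nil => simp
  | cons a L ih =>
    simp only [List.map_cons, List.sum_cons, ih]
    push_cast
    ring

lemma sum_map_add' {α : Type*} (l : List α) (f g : α → ℝ) :
    (l.map (fun x => f x + g x)).sum = (l.map f).sum + (l.map g).sum := by
  induction l with
  | nil => simp
  | cons a l ih => simp [ih]; ring

lemma key (n : ℕ) : ∀ t : RTree (Fin n → Bool),
    (∀ i, t.leaves.countP (fun y => y i) ≤ 1) →
    (3 / Real.log 3) * ((t.leaves.map (fun y =>
        (hw y : ℝ) * Real.log (hw (orv t.leaves)) - (hw y : ℝ) * Real.log (hw y))).sum)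
      ≤ (t.cost : ℝ) := by
  have hl3 : (0 : ℝ) < Real.log 3 := Real.log_pos (by norm_num)
  refine RTree.myrec ?_ ?_
  · -- leaf case
    intro a _
    have horv : orv [a] = a := by
      funext i; simp [orv]
    simp [RTree.leaves, RTree.cost, horv]
  · -- node case
    intro ts ih h
    rcases eq_or_ne ts [] with hts | hts
    · subst hts
      simp [RTree.leaves, RTree.cost]
    have hklen : 1 ≤ ts.length := List.length_pos_of_ne_nil hts
    have hleaves : RTree.leaves (RTree.node ts) = (ts.map RTree.leaves).flatten := by
      simp [RTree.leaves]
    have hcost0 : (RTree.node ts).cost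
        = hw (orv (RTree.leaves (.node ts))) * ts.length + (ts.map RTree.cost).sum := by
      simp [RTree.cost]
    have hcost : ((RTree.node ts).cost : ℝ)
        = (hw (orv (RTree.leaves (.node ts))) : ℝ) * ts.length
          + (ts.map (fun t => (t.cost : ℝ))).sum := by
      rw [hcost0]
      push_cast [Nat.cast_list_sum, List.map_map]
      rfl
    set W : ℕ := hw (orv (RTree.leaves (.node ts))) with hWdef
    -- disjointness for children
    have hchild : ∀ t ∈ ts, ∀ i, t.leaves.countP (fun y => y i) ≤ 1 := by
      intro t ht i
      have h1 := h i
      rw [hleaves, List.countP_flatten, List.map_map] at h1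
      refine le_trans (List.le_sum_of_mem ?_) h1
      exact List.mem_map_of_mem ht
    have h2 : ∀ t ∈ ts, ((t.leaves.map hw).sum : ℕ) = hw (orv t.leaves) :=
      fun t ht => (hw_orv_eq _ (hchild t ht)).symm
    -- W = sum of child weights
    have hWsum : W = (ts.map (fun t => hw (orv t.leaves))).sum := by
      rw [hWdef, hw_orv_eq _ h, hleaves, List.map_flatten, List.sum_flatten,
        List.map_map, List.map_map]
      exact congrArg List.sum (List.map_congr_left (fun t ht => (h2 t ht).symm)).symm
    -- decompose the left sum
    have hsplit : ((RTree.leaves (RTree.node ts)).map (fun y =>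
        (hw y : ℝ) * Real.log W - (hw y : ℝ) * Real.log (hw y))).sum
        = (ts.map (fun t => (t.leaves.map (fun y =>
            (hw y : ℝ) * Real.log (hw (orv t.leaves)) - (hw y : ℝ) * Real.log (hw y))).sum)).sum
          + (ts.map (fun t => (hw (orv t.leaves) : ℝ) *
              (Real.log W - Real.log (hw (orv t.leaves))))).sum := by
      rw [hleaves, List.map_flatten, List.sum_flatten, List.map_map, List.map_map]
      rw [← sum_map_add']
      apply congrArg List.sum
      apply List.map_congr_left
      intro t ht
      simp only [Function.comp]
      rw [shift_sum t.leaves (W : ℝ) ((hw (orv t.leaves) : ℝ))]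
      congr 2
      exact_mod_cast congrArg Nat.cast (h2 t ht)
    -- entropy bound
    have hent : (ts.map (fun t => (hw (orv t.leaves) : ℝ) *
          (Real.log W - Real.log (hw (orv t.leaves))))).sum
        ≤ (W : ℝ) * Real.log ts.length := by
      have hws : (ts.map (fun t => ((hw (orv t.leaves) : ℝ)))).sum = (W : ℝ) := by
        rw [hWsum, Nat.cast_list_sum, List.map_map]
        rfl
      have h0 : ∀ w ∈ ts.map (fun t => ((hw (orv t.leaves) : ℝ))), 0 ≤ w := by
        intro w hwm
        obtain ⟨t, _, rfl⟩ := List.mem_map.mp hwm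
        positivity
      have hne : ts.map (fun t => ((hw (orv t.leaves) : ℝ))) ≠ [] := by
        simpa using hts
      have := entropy_list _ h0 hne
      rw [hws, List.length_map, List.map_map] at this
      convert this using 2
      rfl
    -- combine
    rw [hcost, hsplit, mul_add]
    have hIH : (3 / Real.log 3) * (ts.map (fun t => (t.leaves.map (fun y =>
        (hw y : ℝ) * Real.log (hw (orv t.leaves)) - (hw y : ℝ) * Real.log (hw y))).sum)).sum
        ≤ (ts.map (fun t => (t.cost : ℝ))).sum := by
      rw [← List.sum_map_mul_left]
      apply List.sum_le_sum
      intro t ht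
      exact ih t ht (hchild t ht)
    have hEnt2 : (3 / Real.log 3) * (ts.map (fun t => (hw (orv t.leaves) : ℝ) *
          (Real.log W - Real.log (hw (orv t.leaves))))).sum
        ≤ (W : ℝ) * ts.length := by
      have hmono := mul_le_mul_of_nonneg_left hent
        (by positivity : (0:ℝ) ≤ 3 / Real.log 3)
      refine hmono.trans ?_
      have h3 := three_log ts.length hklen
      have hW0 : (0:ℝ) ≤ (W : ℝ) := by positivity
      rw [div_mul_eq_mul_div, div_le_iff₀ hl3]
      nlinarith [h3, hW0]
    linarith [hIH, hEnt2]

theorem stmt_3 (n : ℕ) (t : RTree (Fin n → Bool))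
    (hmc : ∀ i : Fin n, (t.leaves.countP (fun y => y i)) = 1) :
    (n : ℝ) + t.cost ≥
      (n : ℝ) + (3 * n / Real.logb 2 3) *
        (t.leaves.map (fun y =>
          ((hw y : ℝ) / n) * Real.logb 2 ((hw y : ℝ) / n)⁻¹)).sum := by
  rcases Nat.eq_zero_or_pos n with hn | hn
  · subst hn
    simp
  · have h1 : ∀ i, t.leaves.countP (fun y => y i) ≤ 1 := fun i => (hmc i).le
    have hWn : hw (orv t.leaves) = n := by
      have hall : ∀ i, orv t.leaves i = true := by
        intro i
        have hpos : 0 < t.leaves.countP (fun y => y i) := by rw [hmc i]; norm_num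
        obtain ⟨y, hy, hyi⟩ := List.countP_pos_iff.mp hpos
        simp only [orv, List.any_eq_true]
        exact ⟨y, hy, hyi⟩
      unfold hw
      rw [Finset.filter_true_of_mem (fun i _ => hall i)]
      simp
    have hkey := key n t h1
    rw [hWn] at hkey
    rw [ge_iff_le, add_le_add_iff_left]
    have heq : (3 * n / Real.logb 2 3) * (t.leaves.map (fun y =>
          ((hw y : ℝ) / n) * Real.logb 2 ((hw y : ℝ) / n)⁻¹)).sum
        = (3 / Real.log 3) * ((t.leaves.map (fun y =>
            (hw y : ℝ) * Real.log n - (hw y : ℝ) * Real.log (hw y))).sum) := by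
      rw [← List.sum_map_mul_left, ← List.sum_map_mul_left]
      apply congrArg List.sum
      apply List.map_congr_left
      intro y _
      rcases Nat.eq_zero_or_pos (hw y) with ha | ha
      · simp [ha]
      · have ha0 : (0:ℝ) < (hw y : ℝ) := by exact_mod_cast ha
        have hn0 : (0:ℝ) < (n : ℝ) := by exact_mod_cast hn
        have hl2 : (0:ℝ) < Real.log 2 := Real.log_pos one_lt_two
        have hl3 : (0:ℝ) < Real.log 3 := Real.log_pos (by norm_num)
        rw [inv_div, Real.logb, Real.logb, Real.log_div hn0.ne' ha0.ne']
        field_simp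
    rw [heq]
    exact hkey
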